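/- In type A_n with x = Σ a_β·α_β written in the simple-root basis, condition (2) [a_β > (c_{α,β}/c_{α,α})·a_α for all α ≠ β, plus positivity] is equivalent to condition (3) [the same inequalities only for adjacent pairs |α−β| = 1, plus positivity], where c = (C^T)^{-1} for the A_n Cartan matrix C. -/

import Mathlib

/-- The inverse of the `A_n` Cartan matrix (symmetric for `A_n`):
`c_{ij} = min(i,j)·(n+1-max(i,j))/(n+1)` in 1-indexed form. -/
def invCartanA (n : ℕ) : Matrix (Fin n) (Fin n) ℚ := fun i j =>
  ((min i.val j.val : ℚ) + 1) * ((n : ℚ) - (max i.val j.val : ℚ)) / ((n : ℚ) + 1)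

/-- Condition (2): `a_i > 0` for all `i`, and `a_j > (c_{i,j}/c_{i,i})·a_i` for all `i ≠ j`. -/
def P2 (n : ℕ) (a : Fin n → ℚ) : Prop :=
  (∀ i, 0 < a i) ∧
  ∀ i j : Fin n, i ≠ j → invCartanA n i j / invCartanA n i i * a i < a j

/-- Condition (3): `a_i > 0` for all `i`, and `a_j > (c_{i,j}/c_{i,i})·a_i` for
adjacent pairs `|i - j| = 1` only. -/
def P3 (n : ℕ) (a : Fin n → ℚ) : Prop :=
  (∀ i, 0 < a i) ∧
  ∀ i j : Fin n, (i.val + 1 = j.val ∨ j.val + 1 = i.val) →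
    invCartanA n i j / invCartanA n i i * a i < a j

lemma aux_split (A B C x : ℚ) (hB : B ≠ 0) : A / C * x = A / B * (B / C * x) := by
  field_simp

lemma ratio_up (n : ℕ) (i j : Fin n) (h : i.val ≤ j.val) :
    invCartanA n i j / invCartanA n i i = ((n:ℚ) - j.val) / ((n:ℚ) - i.val) := by
  have hi : (i.val : ℚ) < n := by exact_mod_cast i.isLt
  have hi' : ((n:ℚ) - i.val) ≠ 0 := by linarith
  have h1 : ((i.val : ℚ) + 1) ≠ 0 := by positivity
  have h2 : ((n : ℚ) + 1) ≠ 0 := by positivity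
  unfold invCartanA
  rw [min_eq_left (by exact_mod_cast h : ((i.val:ℚ) ≤ j.val)),
    max_eq_right (by exact_mod_cast h : ((i.val:ℚ) ≤ j.val)), min_self, max_self]
  field_simp

lemma ratio_down (n : ℕ) (i j : Fin n) (h : j.val ≤ i.val) :
    invCartanA n i j / invCartanA n i i = ((j.val:ℚ) + 1) / ((i.val:ℚ) + 1) := by
  have hi : (i.val : ℚ) < n := by exact_mod_cast i.isLt
  have hi' : ((n:ℚ) - i.val) ≠ 0 := by linarith
  have h1 : ((i.val : ℚ) + 1) ≠ 0 := by positivity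
  have h2 : ((n : ℚ) + 1) ≠ 0 := by positivity
  unfold invCartanA
  rw [min_eq_right (by exact_mod_cast h : ((j.val:ℚ) ≤ i.val)),
    max_eq_left (by exact_mod_cast h : ((j.val:ℚ) ≤ i.val)), min_self, max_self]
  field_simp

/-- For type `A_n`, the cone condition over all pairs is equivalent to the
cone condition over adjacent pairs only. -/
theorem stmt10 (n : ℕ) (a : Fin n → ℚ) : P2 n a ↔ P3 n a := by
  constructor
  · rintro ⟨hpos, h⟩
    exact ⟨hpos, fun i j hij => h i j (by intro he; subst he; omega)⟩
  · rintro ⟨hpos, h⟩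
    refine ⟨hpos, ?_⟩
    have hup : ∀ d : ℕ, ∀ i j : Fin n, j.val = i.val + d + 1 →
        ((n:ℚ) - j.val) / ((n:ℚ) - i.val) * a i < a j := by
      intro d
      induction d with
      | zero =>
        intro i j hij
        have := h i j (Or.inl (by omega))
        rwa [ratio_up n i j (by omega)] at this
      | succ d ih =>
        intro i j hij
        set k : Fin n := ⟨i.val + d + 1, by omega⟩ with hk
        have h1 : ((n:ℚ) - k.val) / ((n:ℚ) - i.val) * a i < a k := ih i k rfl
        have h2 : ((n:ℚ) - j.val) / ((n:ℚ) - k.val) * a k < a j := by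
          have := h k j (Or.inl (by simp [hk]; omega))
          rwa [ratio_up n k j (by simp [hk]; omega)] at this
        have hnj : (0:ℚ) < (n:ℚ) - j.val := by
          have : (j.val : ℚ) < n := by exact_mod_cast j.isLt
          linarith
        have hnk : (0:ℚ) < (n:ℚ) - k.val := by
          have : (k.val : ℚ) < n := by exact_mod_cast k.isLt
          linarith
        have h3 : ((n:ℚ) - j.val) / ((n:ℚ) - k.val) *
            (((n:ℚ) - k.val) / ((n:ℚ) - i.val) * a i) <
            ((n:ℚ) - j.val) / ((n:ℚ) - k.val) * a k := by
          apply mul_lt_mul_of_pos_left h1 (by positivity)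
        calc ((n:ℚ) - j.val) / ((n:ℚ) - i.val) * a i
            = ((n:ℚ) - j.val) / ((n:ℚ) - k.val) *
              (((n:ℚ) - k.val) / ((n:ℚ) - i.val) * a i) :=
              aux_split _ _ _ _ hnk.ne'
          _ < ((n:ℚ) - j.val) / ((n:ℚ) - k.val) * a k := h3
          _ < a j := h2
    have hdown : ∀ d : ℕ, ∀ i j : Fin n, i.val = j.val + d + 1 →
        ((j.val:ℚ) + 1) / ((i.val:ℚ) + 1) * a i < a j := by
      intro d
      induction d with
      | zero =>
        intro i j hij
        have := h i j (Or.inr (by omega))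
        rwa [ratio_down n i j (by omega)] at this
      | succ d ih =>
        intro i j hij
        set k : Fin n := ⟨j.val + d + 1, by omega⟩ with hk
        have h1 : ((j.val:ℚ) + 1) / ((k.val:ℚ) + 1) * a k < a j := ih k j rfl
        have h2 : ((k.val:ℚ) + 1) / ((i.val:ℚ) + 1) * a i < a k := by
          have := h i k (Or.inr (by simp [hk]; omega))
          rwa [ratio_down n i k (by simp [hk]; omega)] at this
        have hkp : (0:ℚ) < (k.val:ℚ) + 1 := by positivity
        have hjp : (0:ℚ) < (j.val:ℚ) + 1 := by positivity
        have h3 : ((j.val:ℚ) + 1) / ((k.val:ℚ) + 1) *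
            (((k.val:ℚ) + 1) / ((i.val:ℚ) + 1) * a i) <
            ((j.val:ℚ) + 1) / ((k.val:ℚ) + 1) * a k := by
          apply mul_lt_mul_of_pos_left h2 (by positivity)
        calc ((j.val:ℚ) + 1) / ((i.val:ℚ) + 1) * a i
            = ((j.val:ℚ) + 1) / ((k.val:ℚ) + 1) *
              (((k.val:ℚ) + 1) / ((i.val:ℚ) + 1) * a i) :=
              aux_split _ _ _ _ hkp.ne'
          _ < ((j.val:ℚ) + 1) / ((k.val:ℚ) + 1) * a k := h3
          _ < a j := h1
    intro i j hij
    rcases lt_or_gt_of_ne (fun he => hij (Fin.ext he) : i.val ≠ j.val) with hlt | hgt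
    · rw [ratio_up n i j (le_of_lt hlt)]
      exact hup (j.val - i.val - 1) i j (by omega)
    · rw [ratio_down n i j (le_of_lt hgt)]
      exact hdown (i.val - j.val - 1) i j (by omega)
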